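/- arXiv:2310.11630 — 4 statements merged into one kernel-verified Lean document; each statement's English description precedes it below -/
import Mathlib

section
/- Proposition 1, Part 1 (compositeness of the null of no mediation effect for a binary outcome). Let g(x) = eˣ/(1+eˣ) be the logistic function, let κ : ℝ → Measure(ℝ) be a family of Borel probability measures on ℝ such that (i) for every t ∈ ℝ the map ν ↦ κ(ν)((t, ∞)) is monotone nondecreasing, and (ii) κ is injective (distinct parameters give distinct measures). Fix real numbers μ₁, μ₂ and s ≠ s*. For real parameters α, β define P_s(α, β) = ∫ g(β m + μ₁) dκ(α s + μ₂)(m) and P_{s*}(α, β) = ∫ g(β m + μ₁) dκ(α s* + μ₂)(m). Then P_s(α, β) = P_{s*}(α, β) if and only if α = 0 or β = 0. -/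
open MeasureTheory

noncomputable def logistic (x : ℝ) : ℝ := Real.exp x / (1 + Real.exp x)

lemma logistic_mem_Ioo (x : ℝ) : logistic x ∈ Set.Ioo (0:ℝ) 1 := by
  have h1 : 0 < Real.exp x := Real.exp_pos x
  have h2 : (0:ℝ) < 1 + Real.exp x := by linarith
  rw [logistic]
  constructor
  · positivity
  · rw [div_lt_one h2]; linarith

lemma logistic_strictMono : StrictMono logistic := by
  intro x y hxy
  have hx : 0 < Real.exp x := Real.exp_pos x
  have hy : 0 < Real.exp y := Real.exp_pos y
  have hxy' : Real.exp x < Real.exp y := Real.exp_lt_exp.2 hxy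
  rw [logistic, logistic, div_lt_div_iff₀ (by linarith) (by linarith)]
  nlinarith

lemma logistic_continuous : Continuous logistic := by
  apply Real.continuous_exp.div (by continuity)
  intro x; have := Real.exp_pos x; positivity

lemma logistic_log (r : ℝ) (hr : 0 < r) : logistic (Real.log r) = r / (1 + r) := by
  rw [logistic, Real.exp_log hr]

lemma logistic_neg (x : ℝ) : logistic (-x) = 1 - logistic x := by
  rw [logistic, logistic, Real.exp_neg]
  have h1 : 0 < Real.exp x := Real.exp_pos x
  field_simp
  ring

lemma integrable_logistic_comp (μ : Measure ℝ) [IsProbabilityMeasure μ] (β μ₁ : ℝ) :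
    Integrable (fun m => logistic (β * m + μ₁)) μ := by
  have hc : Continuous fun m => logistic (β * m + μ₁) :=
    logistic_continuous.comp (by continuity)
  refine (integrable_const (1:ℝ)).mono' hc.aestronglyMeasurable ?_
  filter_upwards with m
  have h := logistic_mem_Ioo (β * m + μ₁)
  rw [Real.norm_eq_abs, abs_of_pos h.1]; exact h.2.le

lemma key (κ : ℝ → Measure ℝ) (hprob : ∀ ν, IsProbabilityMeasure (κ ν))
    (hmono : ∀ t : ℝ, Monotone fun ν => κ ν (Set.Ioi t))
    (μ₁ β ν₁ ν₂ : ℝ) (hβ : 0 < β) (hν : ν₁ ≤ ν₂)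
    (heq : ∫ m, logistic (β * m + μ₁) ∂(κ ν₁) = ∫ m, logistic (β * m + μ₁) ∂(κ ν₂)) :
    κ ν₁ = κ ν₂ := by
  haveI := hprob ν₁; haveI := hprob ν₂
  set h : ℝ → ℝ := fun m => logistic (β * m + μ₁) with hh
  have hcont : Continuous h := logistic_continuous.comp (by continuity)
  have hsm : StrictMono h := by
    intro x y hxy
    exact logistic_strictMono (by nlinarith)
  have h01 : ∀ m, h m ∈ Set.Ioo (0:ℝ) 1 := fun m => logistic_mem_Ioo _
  -- the inverse of h on (0,1)
  set c : ℝ → ℝ := fun t => (Real.log (t / (1 - t)) - μ₁) / β with hc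
  have hhc : ∀ t ∈ Set.Ioo (0:ℝ) 1, h (c t) = t := by
    rintro t ⟨ht0, ht1⟩
    have hr : 0 < t / (1 - t) := by
      apply div_pos ht0; linarith
    have hb : β * ((Real.log (t / (1 - t)) - μ₁) / β) + μ₁ = Real.log (t / (1 - t)) := by
      field_simp; ring
    show logistic (β * ((Real.log (t / (1 - t)) - μ₁) / β) + μ₁) = t
    rw [hb, logistic_log _ hr]
    have h1t : (1:ℝ) - t ≠ 0 := by linarith
    have hone : 1 + t / (1 - t) = 1 / (1 - t) := by field_simp; ring
    rw [hone]
    rw [div_div_div_cancel_right₀]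
    · simp
    · exact h1t
  have hset : ∀ t ∈ Set.Ioo (0:ℝ) 1, {m : ℝ | t < h m} = Set.Ioi (c t) := by
    intro t ht
    ext m
    simp only [Set.mem_setOf_eq, Set.mem_Ioi]
    constructor
    · intro hlt
      have h2 : h (c t) < h m := by rw [hhc t ht]; exact hlt
      exact hsm.lt_iff_lt.1 h2
    · intro hlt
      have h2 : h (c t) < h m := hsm hlt
      rwa [hhc t ht] at h2
  -- level functions
  set G : ℝ → ℝ → ENNReal := fun ν t => κ ν {m : ℝ | t < h m} with hG
  have Ganti : ∀ ν, Antitone (G ν) := by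
    intro ν t₁ t₂ h12
    exact measure_mono (fun m hm => lt_of_le_of_lt h12 hm)
  have Gmeas : ∀ ν, Measurable (G ν) := fun ν => (Ganti ν).measurable
  have Gle : ∀ t ∈ Set.Ioi (0:ℝ), G ν₁ t ≤ G ν₂ t := by
    intro t ht
    rcases lt_or_ge t 1 with h1 | h1
    · rw [hG]; simp only
      rw [hset t ⟨ht, h1⟩]
      exact hmono (c t) hν
    · have : {m : ℝ | t < h m} = ∅ := by
        ext m; simp only [Set.mem_setOf_eq, Set.mem_empty_iff_false, iff_false, not_lt]
        exact le_trans (h01 m).2.le h1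
      rw [hG]; simp only [this, measure_empty]; exact le_refl 0
  -- layer cake
  have lc : ∀ ν, ∫⁻ m, ENNReal.ofReal (h m) ∂(κ ν) = ∫⁻ t in Set.Ioi (0:ℝ), G ν t := by
    intro ν
    exact lintegral_eq_lintegral_meas_lt (κ ν) (ae_of_all _ fun m => (h01 m).1.le)
      hcont.aemeasurable
  have hleq : ∫⁻ t in Set.Ioi (0:ℝ), G ν₁ t = ∫⁻ t in Set.Ioi (0:ℝ), G ν₂ t := by
    rw [← lc, ← lc, ← ofReal_integral_eq_lintegral_ofReal (integrable_logistic_comp _ β μ₁)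
      (ae_of_all _ fun m => (h01 m).1.le),
      ← ofReal_integral_eq_lintegral_ofReal (integrable_logistic_comp _ β μ₁)
      (ae_of_all _ fun m => (h01 m).1.le), heq]
  have hfin : ∫⁻ t in Set.Ioi (0:ℝ), G ν₁ t ≠ ⊤ := by
    rw [← lc]
    refine ne_of_lt (lt_of_le_of_lt (lintegral_mono fun m => ?_) (by simp : (∫⁻ _ : ℝ, 1 ∂(κ ν₁)) < ⊤))
    exact ENNReal.ofReal_le_one.mpr (h01 m).2.le
  -- a.e. equality of level functions
  have hae : ∀ᵐ t ∂(volume.restrict (Set.Ioi (0:ℝ))), G ν₁ t = G ν₂ t := by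
    have hle_ae : G ν₁ ≤ᵐ[volume.restrict (Set.Ioi (0:ℝ))] G ν₂ :=
      (ae_restrict_iff' measurableSet_Ioi).2 (ae_of_all _ Gle)
    have hsub : ∫⁻ t in Set.Ioi (0:ℝ), (G ν₂ t - G ν₁ t) = 0 := by
      rw [lintegral_sub ((Gmeas ν₁)) hfin hle_ae, hleq, tsub_self]
    have := (lintegral_eq_zero_iff ((Gmeas ν₂).sub (Gmeas ν₁))).1 hsub
    filter_upwards [this, hle_ae] with t h1 h2
    have : G ν₂ t ≤ G ν₁ t := tsub_eq_zero_iff_le.1 h1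
    exact le_antisymm h2 this
  have hae' : ∀ᵐ t : ℝ, t ∈ Set.Ioi (0:ℝ) → G ν₁ t = G ν₂ t :=
    (ae_restrict_iff' measurableSet_Ioi).1 hae
  -- equality of tails
  have tails : ∀ u : ℝ, κ ν₁ (Set.Ioi u) = κ ν₂ (Set.Ioi u) := by
    intro u
    have hseq : ∀ n : ℕ, ∃ v : ℝ, u < v ∧ v < u + 1 / (n + 1) ∧
        κ ν₁ (Set.Ioi v) = κ ν₂ (Set.Ioi v) := by
      intro n
      have hεpos : (0:ℝ) < 1 / (n + 1) := by positivity
      have hlt : h u < h (u + 1 / (n + 1)) := hsm (by linarith)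
      set J := Set.Ioo (h u) (h (u + 1 / (n + 1))) with hJ
      have hJpos : 0 < volume J := by
        rw [hJ, Real.volume_Ioo]
        exact ENNReal.ofReal_pos.2 (by linarith)
      -- the bad set is null
      obtain ⟨N, hN0, hN⟩ : ∃ N : Set ℝ, volume N = 0 ∧
          ∀ t ∉ N, t ∈ Set.Ioi (0:ℝ) → G ν₁ t = G ν₂ t := by
        refine ⟨{t | ¬ (t ∈ Set.Ioi (0:ℝ) → G ν₁ t = G ν₂ t)}, hae', ?_⟩
        intro t ht; simpa [Set.mem_setOf_eq, not_not] using ht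
      have : ¬ J ⊆ N := fun hsub => absurd (measure_mono_null hsub hN0) hJpos.ne'
      obtain ⟨t, htJ, htN⟩ := Set.not_subset.1 this
      have ht01 : t ∈ Set.Ioo (0:ℝ) 1 :=
        ⟨lt_trans (h01 u).1 htJ.1, lt_trans htJ.2 (h01 _).2⟩
      have hGt : G ν₁ t = G ν₂ t := hN t htN ht01.1
      have hvu : u < c t := by
        have := htJ.1; rw [← hhc t ht01] at this; exact hsm.lt_iff_lt.1 this
      have hvu2 : c t < u + 1 / (n + 1) := by
        have := htJ.2; rw [← hhc t ht01] at this; exact hsm.lt_iff_lt.1 this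
      refine ⟨c t, hvu, hvu2, ?_⟩
      have h2 : (κ ν₁) {m | t < h m} = (κ ν₂) {m | t < h m} := hGt
      rwa [hset t ht01] at h2
    choose v hv1 hv2 hv3 using hseq
    have hUnion : Set.Ioi u = ⋃ n, Set.Ioi (v n) := by
      ext m
      simp only [Set.mem_Ioi, Set.mem_iUnion]
      constructor
      · intro hm
        obtain ⟨n, hn⟩ := exists_nat_one_div_lt (sub_pos.2 hm)
        exact ⟨n, by have := hv2 n; linarith⟩
      · rintro ⟨n, hn⟩; exact lt_trans (hv1 n) hn
    have hdir : Directed (· ⊆ ·) (fun n => Set.Ioi (v n)) := by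
      intro a b
      rcases le_total (v a) (v b) with hab | hab
      · exact ⟨a, subset_rfl, Set.Ioi_subset_Ioi hab⟩
      · exact ⟨b, Set.Ioi_subset_Ioi hab, subset_rfl⟩
    rw [hUnion, hdir.measure_iUnion, hdir.measure_iUnion]
    exact iSup_congr hv3
  -- conclude
  refine Measure.ext_of_Iic (κ ν₁) (κ ν₂) fun a => ?_
  have h1 : Set.Iic a = (Set.Ioi a)ᶜ := by simp
  rw [h1, measure_compl measurableSet_Ioi (measure_ne_top _ _),
    measure_compl measurableSet_Ioi (measure_ne_top _ _), measure_univ, measure_univ, tails a]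

/-- Proposition 1, Part 1: compositeness of the null of no mediation effect for a binary
outcome.  `g` is the logistic function, `κ` is a family of Borel probability measures on ℝ
with monotone nondecreasing tail probabilities and injective parametrization. -/
theorem prop1_part1_composite_null
    (g : ℝ → ℝ) (hg : g = fun x => Real.exp x / (1 + Real.exp x))
    (κ : ℝ → Measure ℝ) (hprob : ∀ ν, IsProbabilityMeasure (κ ν))
    (hmono : ∀ t : ℝ, Monotone fun ν => κ ν (Set.Ioi t))
    (hinj : Function.Injective κ)
    (μ₁ μ₂ s s' : ℝ) (hss : s ≠ s') (α β : ℝ) :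
    (∫ m, g (β * m + μ₁) ∂(κ (α * s + μ₂))) = (∫ m, g (β * m + μ₁) ∂(κ (α * s' + μ₂))) ↔
      α = 0 ∨ β = 0 := by
  have hgl : g = logistic := hg
  subst hgl
  set ν₁ := α * s + μ₂ with hν₁
  set ν₂ := α * s' + μ₂ with hν₂
  haveI := hprob ν₁; haveI := hprob ν₂
  constructor
  · intro heq
    by_contra hcon
    push_neg at hcon
    obtain ⟨hα, hβ⟩ := hcon
    have hνne : ν₁ ≠ ν₂ := by
      intro hcontra
      apply hss
      have h2 : α * s = α * s' := by
        rw [hν₁, hν₂] at hcontra; linarith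
      exact mul_left_cancel₀ hα h2
    rcases hβ.lt_or_gt with hblt | hbgt
    · -- β < 0 : use 1 - logistic(-x) = logistic x
      have htrans : ∀ ν : ℝ, (∫ m, logistic (β * m + μ₁) ∂(κ ν)) =
          1 - ∫ m, logistic ((-β) * m + (-μ₁)) ∂(κ ν) := by
        intro ν
        haveI := hprob ν
        have hpt : ∀ m : ℝ, logistic (β * m + μ₁) = 1 - logistic ((-β) * m + (-μ₁)) := by
          intro m
          rw [show (-β) * m + (-μ₁) = -(β * m + μ₁) by ring, logistic_neg]
          ring
        rw [integral_congr_ae (ae_of_all _ hpt),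
          integral_sub (integrable_const 1) (integrable_logistic_comp _ _ _)]
        simp
      have heq2 : ∫ m, logistic ((-β) * m + (-μ₁)) ∂(κ ν₁) =
          ∫ m, logistic ((-β) * m + (-μ₁)) ∂(κ ν₂) := by
        have h3 := heq
        rw [htrans ν₁, htrans ν₂] at h3
        linarith
      rcases hνne.lt_or_gt with h12 | h21
      · exact hνne (hinj (key κ hprob hmono (-μ₁) (-β) ν₁ ν₂ (by linarith) h12.le heq2))
      · exact hνne (hinj (key κ hprob hmono (-μ₁) (-β) ν₂ ν₁ (by linarith) h21.le heq2.symm)).symm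
    · rcases hνne.lt_or_gt with h12 | h21
      · exact hνne (hinj (key κ hprob hmono μ₁ β ν₁ ν₂ hbgt h12.le heq))
      · exact hνne (hinj (key κ hprob hmono μ₁ β ν₂ ν₁ hbgt h21.le heq.symm)).symm
  · rintro (hα | hβ)
    · have h2 : ν₁ = ν₂ := by rw [hν₁, hν₂, hα]; ring
      rw [h2]
    · rw [hβ]
      simp [integral_const, measure_univ]
end

section
/- Proposition 1, Part 2 (zero-gradient phenomenon of the log odds-ratio mediation effect, logistic outcome and logistic binary mediator). Let g(x) = eˣ/(1+eˣ) and logit(y) = log(y/(1−y)). Fix reals μ₁, μ₂ and s ≠ s*. For real parameters α, β set d_β(β) = g(β + μ₁) − g(μ₁), P(α, β; r) = d_β(β)·g(α r + μ₂) + g(μ₁) for r ∈ {s, s*} (one checks 0 < P(α, β; r) < 1), and NIE(α, β) = logit(P(α, β; s)) − logit(P(α, β; s*)). Then: (i) for every α the derivative of a ↦ NIE(a, 0) at a = α is 0, and for every β the derivative of b ↦ NIE(0, b) at b = β is 0; (ii) for every β ≠ 0 the derivative of a ↦ NIE(a, β) at a = 0 is nonzero; (iii) for every α ≠ 0 the derivative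 of b ↦ NIE(α, b) at b = 0 is nonzero. -/
noncomputable def Gf (x : ℝ) : ℝ := Real.exp x / (1 + Real.exp x)

lemma Gf_hasDerivAt (x : ℝ) :
    HasDerivAt Gf (Real.exp x / (1 + Real.exp x)^2) x := by
  have h : (1:ℝ) + Real.exp x ≠ 0 := by positivity
  have := (Real.hasDerivAt_exp x).div ((hasDerivAt_const x (1:ℝ)).add (Real.hasDerivAt_exp x)) h
  convert this using 1
  · rfl
  · rfl
  · funext y; rfl
  · show _ = (Real.exp x * (1 + Real.exp x) - Real.exp x * (0 + Real.exp x)) / (1 + Real.exp x) ^ 2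
    ring

lemma Gf_pos (x : ℝ) : 0 < Gf x := by unfold Gf; positivity

lemma Gf_lt_one (x : ℝ) : Gf x < 1 := by
  unfold Gf
  rw [div_lt_one (by positivity)]
  linarith [Real.exp_pos x]

lemma Gf_injective : Function.Injective Gf := by
  have : StrictMono Gf := by
    intro x y h
    unfold Gf
    rw [div_lt_div_iff₀ (by positivity) (by positivity)]
    nlinarith [Real.exp_lt_exp.2 h, Real.exp_pos x, Real.exp_pos y]
  exact this.injective

lemma logit_comp {u : ℝ → ℝ} {d x P : ℝ} (hu : HasDerivAt u d x)
    (hval : u x = P) (h0 : 0 < P) (h1 : P < 1) :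
    HasDerivAt (fun y => Real.log (u y / (1 - u y))) (d / (P * (1 - P))) x := by
  subst hval
  have h2 : (1:ℝ) - u x ≠ 0 := by linarith
  have hq : HasDerivAt (fun y => u y / (1 - u y))
      ((d * (1 - u x) - u x * (0 - d)) / (1 - u x)^2) x :=
    hu.div ((hasDerivAt_const x (1:ℝ)).sub hu) h2
  have hne : u x / (1 - u x) ≠ 0 := div_ne_zero (ne_of_gt h0) h2
  have := hq.log hne
  convert this using 1
  field_simp
  ring

lemma Gf_affine_hasDerivAt (r μ₂ : ℝ) :
    HasDerivAt (fun a : ℝ => Gf (a * r + μ₂))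
      (Real.exp μ₂ / (1 + Real.exp μ₂)^2 * r) 0 := by
  have hlin : HasDerivAt (fun a : ℝ => a * r + μ₂) r 0 := by
    simpa using ((hasDerivAt_id (0:ℝ)).mul_const r).add_const μ₂
  have h0 : HasDerivAt Gf (Real.exp μ₂ / (1 + Real.exp μ₂)^2) ((fun a : ℝ => a * r + μ₂) 0) := by
    rw [show (fun a : ℝ => a * r + μ₂) 0 = μ₂ by norm_num]
    exact Gf_hasDerivAt μ₂
  exact h0.comp 0 hlin

/-- Key derivative for part (ii): d/dα at 0 of logit(c·g(αr+μ₂)+k). -/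
lemma key_deriv1 (c k r μ₂ : ℝ) (hP0 : 0 < c * Gf μ₂ + k) (hP1 : c * Gf μ₂ + k < 1) :
    HasDerivAt (fun a => Real.log ((c * Gf (a * r + μ₂) + k) / (1 - (c * Gf (a * r + μ₂) + k))))
      (c * (Real.exp μ₂ / (1 + Real.exp μ₂)^2 * r) / ((c * Gf μ₂ + k) * (1 - (c * Gf μ₂ + k)))) 0 := by
  have hu : HasDerivAt (fun a => c * Gf (a * r + μ₂) + k)
      (c * (Real.exp μ₂ / (1 + Real.exp μ₂)^2 * r)) 0 :=
    ((Gf_affine_hasDerivAt r μ₂).const_mul c).add_const k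
  exact logit_comp hu (by norm_num) hP0 hP1

/-- Key derivative for part (iii): d/dβ at 0 of logit((g(β+μ₁)−g μ₁)·A + g μ₁). -/
lemma key_deriv2 (A μ₁ : ℝ) :
    HasDerivAt (fun b => Real.log (((Gf (b + μ₁) - Gf μ₁) * A + Gf μ₁) /
        (1 - ((Gf (b + μ₁) - Gf μ₁) * A + Gf μ₁))))
      (Real.exp μ₁ / (1 + Real.exp μ₁)^2 * A / (Gf μ₁ * (1 - Gf μ₁))) 0 := by
  have hlin : HasDerivAt (fun b : ℝ => b + μ₁) 1 0 := (hasDerivAt_id (0:ℝ)).add_const μ₁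
  have h0 : HasDerivAt Gf (Real.exp μ₁ / (1 + Real.exp μ₁)^2) ((fun b : ℝ => b + μ₁) 0) := by
    rw [show (fun b : ℝ => b + μ₁) 0 = μ₁ by norm_num]
    exact Gf_hasDerivAt μ₁
  have hGb : HasDerivAt (fun b : ℝ => Gf (b + μ₁)) (Real.exp μ₁ / (1 + Real.exp μ₁)^2) 0 := by
    have := h0.comp 0 hlin; rwa [mul_one] at this
  have hu : HasDerivAt (fun b => (Gf (b + μ₁) - Gf μ₁) * A + Gf μ₁)
      (Real.exp μ₁ / (1 + Real.exp μ₁)^2 * A) 0 :=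
    ((hGb.sub_const (Gf μ₁)).mul_const A).add_const (Gf μ₁)
  exact logit_comp hu (by norm_num) (Gf_pos μ₁) (Gf_lt_one μ₁)

/-- Proposition 1, Part 2: zero-gradient phenomenon of the log odds-ratio mediation effect,
logistic outcome and logistic binary mediator. -/
theorem prop1_part2_zero_gradient
    (μ₁ μ₂ s s' : ℝ) (hss : s ≠ s')
    (g logit : ℝ → ℝ)
    (hg : g = fun x => Real.exp x / (1 + Real.exp x))
    (hlogit : logit = fun y => Real.log (y / (1 - y)))
    (dβ : ℝ → ℝ) (hdβ : dβ = fun β => g (β + μ₁) - g μ₁)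
    (Pr : ℝ → ℝ → ℝ → ℝ)
    (hPr : Pr = fun α β r => dβ β * g (α * r + μ₂) + g μ₁)
    (NIE : ℝ → ℝ → ℝ)
    (hNIE : NIE = fun α β => logit (Pr α β s) - logit (Pr α β s')) :
    (∀ α : ℝ, deriv (fun a => NIE a 0) α = 0) ∧
    (∀ β : ℝ, deriv (fun b => NIE 0 b) β = 0) ∧
    (∀ β : ℝ, β ≠ 0 → deriv (fun a => NIE a β) 0 ≠ 0) ∧
    (∀ α : ℝ, α ≠ 0 → deriv (fun b => NIE α b) 0 ≠ 0) := by
  have hg' : g = Gf := hg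
  have hDμ₂ : 0 < Real.exp μ₂ / (1 + Real.exp μ₂)^2 := by positivity
  have hDμ₁ : 0 < Real.exp μ₁ / (1 + Real.exp μ₁)^2 := by positivity
  refine ⟨?_, ?_, ?_, ?_⟩
  · intro α
    have h : (fun a => NIE a 0) = fun _ => (0:ℝ) := by
      funext a
      simp [hNIE, hPr, hdβ]
    rw [h]
    exact deriv_const α 0
  · intro β
    have h : (fun b => NIE 0 b) = fun _ => (0:ℝ) := by
      funext b
      simp [hNIE, hPr]
    rw [h]
    exact deriv_const β 0
  · intro β hβ
    have hβμ : β + μ₁ ≠ μ₁ := fun h => hβ (by linarith)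
    have hcne : Gf (β + μ₁) - Gf μ₁ ≠ 0 :=
      sub_ne_zero.2 fun h => hβμ (Gf_injective h)
    have hP0 : 0 < (Gf (β + μ₁) - Gf μ₁) * Gf μ₂ + Gf μ₁ := by
      nlinarith [mul_pos (Gf_pos μ₂) (Gf_pos (β + μ₁)),
        mul_pos (show (0:ℝ) < 1 - Gf μ₂ by linarith [Gf_lt_one μ₂]) (Gf_pos μ₁)]
    have hP1 : (Gf (β + μ₁) - Gf μ₁) * Gf μ₂ + Gf μ₁ < 1 := by
      nlinarith [mul_pos (Gf_pos μ₂) (show (0:ℝ) < 1 - Gf (β + μ₁) by linarith [Gf_lt_one (β + μ₁)]),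
        mul_pos (show (0:ℝ) < 1 - Gf μ₂ by linarith [Gf_lt_one μ₂])
          (show (0:ℝ) < 1 - Gf μ₁ by linarith [Gf_lt_one μ₁])]
    have hs := key_deriv1 (Gf (β + μ₁) - Gf μ₁) (Gf μ₁) s μ₂ hP0 hP1
    have hs' := key_deriv1 (Gf (β + μ₁) - Gf μ₁) (Gf μ₁) s' μ₂ hP0 hP1
    have key : deriv (fun a => NIE a β) 0 =
        (Gf (β + μ₁) - Gf μ₁) * (Real.exp μ₂ / (1 + Real.exp μ₂)^2 * s) /
          (((Gf (β + μ₁) - Gf μ₁) * Gf μ₂ + Gf μ₁) * (1 - ((Gf (β + μ₁) - Gf μ₁) * Gf μ₂ + Gf μ₁)))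
        - (Gf (β + μ₁) - Gf μ₁) * (Real.exp μ₂ / (1 + Real.exp μ₂)^2 * s') /
          (((Gf (β + μ₁) - Gf μ₁) * Gf μ₂ + Gf μ₁) * (1 - ((Gf (β + μ₁) - Gf μ₁) * Gf μ₂ + Gf μ₁))) := by
      rw [hNIE, hPr, hdβ, hg', hlogit]
      exact (hs.sub hs').deriv
    rw [key, div_sub_div_same]
    refine div_ne_zero ?_ (mul_pos hP0 (by linarith)).ne'
    have hre : (Gf (β + μ₁) - Gf μ₁) * (Real.exp μ₂ / (1 + Real.exp μ₂)^2 * s)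
        - (Gf (β + μ₁) - Gf μ₁) * (Real.exp μ₂ / (1 + Real.exp μ₂)^2 * s')
        = (Gf (β + μ₁) - Gf μ₁) * (Real.exp μ₂ / (1 + Real.exp μ₂)^2) * (s - s') := by ring
    rw [hre]
    exact mul_ne_zero (mul_ne_zero hcne hDμ₂.ne') (sub_ne_zero.2 hss)
  · intro α hα
    have hs := key_deriv2 (Gf (α * s + μ₂)) μ₁
    have hs' := key_deriv2 (Gf (α * s' + μ₂)) μ₁
    have key : deriv (fun b => NIE α b) 0 =
        Real.exp μ₁ / (1 + Real.exp μ₁)^2 * Gf (α * s + μ₂) / (Gf μ₁ * (1 - Gf μ₁))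
        - Real.exp μ₁ / (1 + Real.exp μ₁)^2 * Gf (α * s' + μ₂) / (Gf μ₁ * (1 - Gf μ₁)) := by
      rw [hNIE, hPr, hdβ, hg', hlogit]
      exact (hs.sub hs').deriv
    rw [key, div_sub_div_same]
    refine div_ne_zero ?_ (mul_pos (Gf_pos μ₁) (by linarith [Gf_lt_one μ₁])).ne'
    have hre : Real.exp μ₁ / (1 + Real.exp μ₁)^2 * Gf (α * s + μ₂)
        - Real.exp μ₁ / (1 + Real.exp μ₁)^2 * Gf (α * s' + μ₂)
        = Real.exp μ₁ / (1 + Real.exp μ₁)^2 * (Gf (α * s + μ₂) - Gf (α * s' + μ₂)) := by ring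
    rw [hre]
    refine mul_ne_zero hDμ₁.ne' (sub_ne_zero.2 fun h => ?_)
    have := Gf_injective h
    apply hss
    have hαs : α * s = α * s' := by linarith
    exact mul_left_cancel₀ hα hαs
end

section
/- Proposition 2, Part 2 (zero-gradient phenomenon on the risk-difference scale). Let g(x) = eˣ/(1+eˣ) be the logistic function, and fix reals c and s ≠ s*. For real parameters α, β define F(α, β) = β·( g(α s + c) − g(α s* + c) ). Then: (i) for every α the derivative of a ↦ F(a, 0) at a = α is 0, and for every β the derivative of b ↦ F(0, b) at b = β is 0; (ii) for every β ≠ 0, the derivative of a ↦ F(a, β) at a = 0 equals β·g'(c)·(s − s*), which is nonzero; (iii) for every α ≠ 0, the derivative of b ↦ F(α, b) at b = 0 equals g(α s + c) − g(α s* + c), which is nonzero. -/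
private lemma logistic_hasDerivAt (x : ℝ) :
    HasDerivAt (fun x => Real.exp x / (1 + Real.exp x))
      (Real.exp x / (1 + Real.exp x) ^ 2) x := by
  have hpos : (0:ℝ) < 1 + Real.exp x := by positivity
  have h := (Real.hasDerivAt_exp x).div
    ((hasDerivAt_const x (1:ℝ)).add (Real.hasDerivAt_exp x)) (ne_of_gt hpos)
  exact h.congr_deriv (by simp only [Pi.add_apply, zero_add]; ring)

private lemma logistic_strictMono_s5 :
    StrictMono (fun x => Real.exp x / (1 + Real.exp x)) := by
  intro a b hab
  have ha : (0:ℝ) < 1 + Real.exp a := by positivity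
  have hb : (0:ℝ) < 1 + Real.exp b := by positivity
  simp only
  rw [div_lt_div_iff₀ ha hb]
  have : Real.exp a < Real.exp b := Real.exp_lt_exp.mpr hab
  nlinarith

/-- Proposition 2, Part 2: zero-gradient phenomenon of the natural indirect effect on the
risk-difference scale, with logistic mediator link `g x = eˣ/(1+eˣ)`. -/
theorem prop2_part2_zero_gradient
    (c s s' : ℝ) (hss : s ≠ s')
    (g : ℝ → ℝ) (hg : g = fun x => Real.exp x / (1 + Real.exp x))
    (F : ℝ → ℝ → ℝ)
    (hF : F = fun α β => β * (g (α * s + c) - g (α * s' + c))) :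
    (∀ α : ℝ, deriv (fun a => F a 0) α = 0) ∧
    (∀ β : ℝ, deriv (fun b => F 0 b) β = 0) ∧
    (∀ β : ℝ, β ≠ 0 →
      deriv (fun a => F a β) 0 = β * (Real.exp c / (1 + Real.exp c) ^ 2) * (s - s') ∧
      deriv (fun a => F a β) 0 ≠ 0) ∧
    (∀ α : ℝ, α ≠ 0 →
      deriv (fun b => F α b) 0 = g (α * s + c) - g (α * s' + c) ∧
      deriv (fun b => F α b) 0 ≠ 0) := by
  subst hg hF
  have hgd : ∀ x : ℝ, HasDerivAt (fun x => Real.exp x / (1 + Real.exp x))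
      (Real.exp x / (1 + Real.exp x) ^ 2) x := logistic_hasDerivAt
  refine ⟨?_, ?_, ?_, ?_⟩
  · intro α
    simp
  · intro β
    simp
  · intro β hβ
    -- derivative of a ↦ β * (g (a*s+c) - g (a*s'+c)) at 0
    have h1 : HasDerivAt (fun a : ℝ => a * s + c) s 0 :=
      by simpa using ((hasDerivAt_id 0).mul_const s).add_const c
    have h2 : HasDerivAt (fun a : ℝ => a * s' + c) s' 0 :=
      by simpa using ((hasDerivAt_id 0).mul_const s').add_const c
    have hc1 : HasDerivAt (fun a : ℝ => Real.exp (a * s + c) / (1 + Real.exp (a * s + c)))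
        (Real.exp (0 * s + c) / (1 + Real.exp (0 * s + c)) ^ 2 * s) 0 :=
      by have := (hgd (0 * s + c)).comp 0 h1; exact this
    have hc2 : HasDerivAt (fun a : ℝ => Real.exp (a * s' + c) / (1 + Real.exp (a * s' + c)))
        (Real.exp (0 * s' + c) / (1 + Real.exp (0 * s' + c)) ^ 2 * s') 0 :=
      by have := (hgd (0 * s' + c)).comp 0 h2; exact this
    have hD : HasDerivAt (fun a : ℝ =>
        β * (Real.exp (a * s + c) / (1 + Real.exp (a * s + c)) -
             Real.exp (a * s' + c) / (1 + Real.exp (a * s' + c))))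
        (β * (Real.exp (0 * s + c) / (1 + Real.exp (0 * s + c)) ^ 2 * s -
              Real.exp (0 * s' + c) / (1 + Real.exp (0 * s' + c)) ^ 2 * s')) 0 :=
      (hc1.sub hc2).const_mul β
    have hval : deriv (fun a : ℝ =>
        β * (Real.exp (a * s + c) / (1 + Real.exp (a * s + c)) -
             Real.exp (a * s' + c) / (1 + Real.exp (a * s' + c)))) 0 =
        β * (Real.exp c / (1 + Real.exp c) ^ 2) * (s - s') := by
      rw [hD.deriv]; simp; ring
    refine ⟨hval, ?_⟩
    rw [hval]
    have hpos : (0:ℝ) < Real.exp c / (1 + Real.exp c) ^ 2 := by positivity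
    have hss' : s - s' ≠ 0 := sub_ne_zero.mpr hss
    exact mul_ne_zero (mul_ne_zero hβ (ne_of_gt hpos)) hss'
  · intro α hα
    have hval : deriv (fun b : ℝ =>
        b * (Real.exp (α * s + c) / (1 + Real.exp (α * s + c)) -
             Real.exp (α * s' + c) / (1 + Real.exp (α * s' + c)))) 0 =
        Real.exp (α * s + c) / (1 + Real.exp (α * s + c)) -
        Real.exp (α * s' + c) / (1 + Real.exp (α * s' + c)) := by
      simp [deriv_mul_const]
    refine ⟨hval, ?_⟩
    rw [hval]
    have harg : α * s + c ≠ α * s' + c := by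
      intro h
      apply hss
      have := add_right_cancel h
      exact mul_left_cancel₀ hα this
    exact sub_ne_zero.mpr (fun h => harg (logistic_strictMono_s5.injective h))
end

section
/- Almost-sure consistency of the OLS error-variance ratio (Lemma S.3, first part). Let (X_i, S_i, e_i)_{i≥1} be an i.i.d. sequence of ℝᵖ×ℝ×ℝ-valued random vectors with generic copy (X, S, e). Fix α ∈ ℝ, a ∈ ℝᵖ and define M_i := α S_i + ⟨X_i, a⟩ + e_i. Assume: E[X_j e] = 0 for all j and E[S e] = 0; the variables e, S and all coordinates of X are square integrable; E[XXᵀ] is invertible; and, writing Z̃ := (S, Xᵀ)ᵀ ∈ ℝ^{1+p}, the Gram matrix E[Z̃Z̃ᵀ] is invertible. Let Q_S := E[XXᵀ]⁻¹E[XS] and S_⊥ := S − ⟨X, Q_S⟩, and note E[S_⊥²] > 0. For each n let (α̂_n, â_n) := (Z̃_nᵀZ̃_n)⁻¹Z̃_nᵀM_n be the OLS coefficients from the first n observations (Z̃_n the n×(1+p) design matrix with rows (S_i, X_iᵀ)), let ε̂_{n,i} := M_i − α̂_n S_i − ⟨X_i, â_n⟩, let Q̂_{S,n} := (n⁻¹Σ_{i≤n}X_iX_iᵀ)⁻¹(n⁻¹Σ_{i≤n}S_iX_i)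 and Ŝ_{⊥,n,i} := S_i − ⟨X_i, Q̂_{S,n}⟩, and define σ̂²_n := (Σ_{i≤n} ε̂_{n,i}²) / (Σ_{i≤n} Ŝ_{⊥,n,i}²). Then, almost surely, σ̂²_n → E[e²] / E[S_⊥²] as n → ∞. -/
open MeasureTheory ProbabilityTheory Matrix Filter
open scoped Topology

section OlsAux

lemma olsAux_integrable_mul {Ω : Type*} [MeasurableSpace Ω] {P : Measure Ω} {f g : Ω → ℝ}
    (hf : MemLp f 2 P) (hg : MemLp g 2 P) : Integrable (fun ω => f ω * g ω) P := by
  have h : MemLp (g • f) 1 P :=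
    hf.smul hg
  rw [memLp_one_iff_integrable] at h
  exact h.congr (by filter_upwards with ω; simp [mul_comm])

lemma olsAux_tendsto_inv {m : Type*} [Fintype m] [DecidableEq m]
    {A : ℕ → Matrix m m ℝ} {B : Matrix m m ℝ}
    (hB : IsUnit B.det) (h : Tendsto A atTop (𝓝 B)) :
    Tendsto (fun n => (A n)⁻¹) atTop (𝓝 B⁻¹) := by
  have hdet : Tendsto (fun n => (A n).det) atTop (𝓝 B.det) :=
    ((continuous_id.matrix_det).tendsto B).comp h
  have hadj : Tendsto (fun n => (A n).adjugate) atTop (𝓝 B.adjugate) :=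
    ((continuous_id.matrix_adjugate).tendsto B).comp h
  simp only [Matrix.inv_def, Ring.inverse_eq_inv']
  exact (hdet.inv₀ hB.ne_zero).smul hadj

lemma olsAux_tendsto_matrix {m k : Type*} [Fintype m] [Fintype k]
    {A : ℕ → Matrix m k ℝ} {B : Matrix m k ℝ}
    (h : ∀ i j, Tendsto (fun n => A n i j) atTop (𝓝 (B i j))) : Tendsto A atTop (𝓝 B) :=
  tendsto_pi_nhds.2 fun i => tendsto_pi_nhds.2 fun j => h i j

lemma olsAux_tendsto_entry {m k : Type*} [Fintype m] [Fintype k]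
    {A : ℕ → Matrix m k ℝ} {B : Matrix m k ℝ}
    (h : Tendsto A atTop (𝓝 B)) (i : m) (j : k) :
    Tendsto (fun n => A n i j) atTop (𝓝 (B i j)) :=
  tendsto_pi_nhds.1 (tendsto_pi_nhds.1 h i) j

lemma olsAux_tendsto_mulVec {m : Type*} [Fintype m]
    {A : ℕ → Matrix m m ℝ} {B : Matrix m m ℝ} {v : ℕ → m → ℝ} {w : m → ℝ}
    (hA : Tendsto A atTop (𝓝 B)) (hv : Tendsto v atTop (𝓝 w)) :
    Tendsto (fun n => A n *ᵥ v n) atTop (𝓝 (B *ᵥ w)) := by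
  refine tendsto_pi_nhds.2 fun i => ?_
  show Tendsto (fun n => ∑ j, A n i j * v n j) atTop (𝓝 (∑ j, B i j * w j))
  exact tendsto_finset_sum _ fun j _ =>
    (olsAux_tendsto_entry hA i j).mul (tendsto_pi_nhds.1 hv j)

lemma olsAux_ratio (a b n : ℝ) (hn : n ≠ 0) : (a / n) / (b / n) = a / b := by
  rcases eq_or_ne b 0 with rfl | hb
  · simp
  · field_simp

lemma olsAux_sum_sq_expand {q : ℕ} (n : ℕ) (u : ℕ → ℝ) (w : ℕ → Fin q → ℝ) (δ : Fin q → ℝ) :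
    (∑ i ∈ Finset.range n, (u i + w i ⬝ᵥ δ) ^ 2) / (n : ℝ)
      = (∑ i ∈ Finset.range n, (u i) ^ 2) / n
        + 2 * ∑ j, δ j * ((∑ i ∈ Finset.range n, w i j * u i) / n)
        + ∑ j, ∑ k, δ j * (δ k * ((∑ i ∈ Finset.range n, w i j * w i k) / n)) := by
  have H : (∑ i ∈ Finset.range n, (u i + w i ⬝ᵥ δ) ^ 2)
      = (∑ i ∈ Finset.range n, (u i) ^ 2)
        + 2 * ∑ j, δ j * (∑ i ∈ Finset.range n, w i j * u i)
        + ∑ j, ∑ k, δ j * (δ k * (∑ i ∈ Finset.range n, w i j * w i k)) := by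
    have step1 : ∀ i, (u i + w i ⬝ᵥ δ) ^ 2
        = (u i) ^ 2 + (∑ j, 2 * (δ j * (w i j * u i)))
          + ∑ j, ∑ k, δ j * (δ k * (w i j * w i k)) := by
      intro i
      have hdot : w i ⬝ᵥ δ = ∑ j, w i j * δ j := rfl
      rw [add_sq, hdot]
      congr 1
      · congr 1
        rw [Finset.mul_sum]
        exact Finset.sum_congr rfl fun j _ => by ring
      · rw [sq, Finset.sum_mul_sum]
        exact Finset.sum_congr rfl fun j _ => Finset.sum_congr rfl fun k _ => by ring
    calc (∑ i ∈ Finset.range n, (u i + w i ⬝ᵥ δ) ^ 2)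
        = ∑ i ∈ Finset.range n, ((u i) ^ 2 + (∑ j, 2 * (δ j * (w i j * u i)))
            + ∑ j, ∑ k, δ j * (δ k * (w i j * w i k))) :=
          Finset.sum_congr rfl fun i _ => step1 i
      _ = (∑ i ∈ Finset.range n, (u i) ^ 2)
            + (∑ i ∈ Finset.range n, ∑ j, 2 * (δ j * (w i j * u i)))
            + ∑ i ∈ Finset.range n, ∑ j, ∑ k, δ j * (δ k * (w i j * w i k)) := by
          rw [Finset.sum_add_distrib, Finset.sum_add_distrib]
      _ = _ := by
          congr 1
          · congr 1
            rw [Finset.sum_comm, Finset.mul_sum]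
            refine Finset.sum_congr rfl fun j _ => ?_
            calc ∑ i ∈ Finset.range n, 2 * (δ j * (w i j * u i))
                = ∑ i ∈ Finset.range n, (2 * δ j) * (w i j * u i) :=
                  Finset.sum_congr rfl fun i _ => by ring
              _ = (2 * δ j) * ∑ i ∈ Finset.range n, w i j * u i :=
                  (Finset.mul_sum _ _ _).symm
              _ = 2 * (δ j * ∑ i ∈ Finset.range n, w i j * u i) := by ring
          · rw [Finset.sum_comm]
            refine Finset.sum_congr rfl fun j _ => ?_
            rw [Finset.sum_comm]
            refine Finset.sum_congr rfl fun k _ => ?_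
            calc ∑ i ∈ Finset.range n, δ j * (δ k * (w i j * w i k))
                = ∑ i ∈ Finset.range n, (δ j * δ k) * (w i j * w i k) :=
                  Finset.sum_congr rfl fun i _ => by ring
              _ = (δ j * δ k) * ∑ i ∈ Finset.range n, w i j * w i k :=
                  (Finset.mul_sum _ _ _).symm
              _ = δ j * (δ k * ∑ i ∈ Finset.range n, w i j * w i k) := by ring
  rw [H, add_div, add_div]
  congr 1
  · congr 1
    rw [mul_div_assoc, Finset.sum_div]
    exact congrArg (2 * ·) (Finset.sum_congr rfl fun j _ => mul_div_assoc _ _ _)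
  · rw [Finset.sum_div]
    refine Finset.sum_congr rfl fun j _ => ?_
    rw [Finset.sum_div]
    exact Finset.sum_congr rfl fun k _ => by rw [mul_div_assoc, mul_div_assoc]

def olsPhi (p : ℕ) : Bool ⊕ Fin p → ((Fin p → ℝ) × ℝ × ℝ) → ℝ :=
  Sum.elim (fun b v => cond b v.2.1 v.2.2) (fun k v => v.1 k)

@[simp] lemma olsPhi_inl_true (p : ℕ) (v : (Fin p → ℝ) × ℝ × ℝ) :
    olsPhi p (Sum.inl true) v = v.2.1 := rfl

@[simp] lemma olsPhi_inl_false (p : ℕ) (v : (Fin p → ℝ) × ℝ × ℝ) :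
    olsPhi p (Sum.inl false) v = v.2.2 := rfl

@[simp] lemma olsPhi_inr (p : ℕ) (k : Fin p) (v : (Fin p → ℝ) × ℝ × ℝ) :
    olsPhi p (Sum.inr k) v = v.1 k := rfl

lemma olsPhi_meas (p : ℕ) (j : Bool ⊕ Fin p) : Measurable (olsPhi p j) := by
  rcases j with b | k
  · cases b
    · exact measurable_snd.snd
    · exact measurable_snd.fst
  · exact (measurable_pi_apply k).comp measurable_fst

def olsPsi (p : ℕ) : Fin (p + 1) → Bool ⊕ Fin p :=
  Fin.cases (Sum.inl true) Sum.inr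

@[simp] lemma olsPsi_zero (p : ℕ) : olsPsi p 0 = Sum.inl true := rfl

@[simp] lemma olsPsi_succ (p : ℕ) (k : Fin p) : olsPsi p k.succ = Sum.inr k := by
  simp [olsPsi]

end OlsAux

lemma olsDet {p : ℕ} (x : ℕ → Fin p → ℝ) (s ε m : ℕ → ℝ)
    (α : ℝ) (a : Fin p → ℝ) (hm : ∀ i, m i = α * s i + (x i ⬝ᵥ a) + ε i)
    (GX : Matrix (Fin p) (Fin p) ℝ) (hGXinv : IsUnit GX.det)
    (GZ : Matrix (Fin (p + 1)) (Fin (p + 1)) ℝ) (hGZinv : IsUnit GZ.det)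
    (bS : Fin p → ℝ) (ES2 Ee2 Lden : ℝ)
    (z : ℕ → Fin (p + 1) → ℝ)
    (hz : ∀ i, z i = fun j => Fin.cases (s i) (fun k => x i k) j)
    (hA : Tendsto (fun n : ℕ => ((n : ℝ)⁻¹ • (Matrix.of fun j k =>
        ∑ i ∈ Finset.range n, x i j * x i k : Matrix (Fin p) (Fin p) ℝ))) atTop (𝓝 GX))
    (hb : Tendsto (fun n : ℕ => fun j : Fin p =>
        (n : ℝ)⁻¹ * ∑ i ∈ Finset.range n, s i * x i j) atTop (𝓝 bS))
    (hG : Tendsto (fun n : ℕ => (Matrix.of fun j k =>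
        (∑ i ∈ Finset.range n, z i j * z i k) / n : Matrix (Fin (p + 1)) (Fin (p + 1)) ℝ))
        atTop (𝓝 GZ))
    (hc : Tendsto (fun n : ℕ => fun j : Fin (p + 1) =>
        (∑ i ∈ Finset.range n, z i j * ε i) / n) atTop (𝓝 (0 : Fin (p + 1) → ℝ)))
    (he2 : Tendsto (fun n : ℕ => (∑ i ∈ Finset.range n, (ε i) ^ 2) / (n : ℝ)) atTop (𝓝 Ee2))
    (hs2 : Tendsto (fun n : ℕ => (∑ i ∈ Finset.range n, (s i) ^ 2) / (n : ℝ)) atTop (𝓝 ES2))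
    (QS : Fin p → ℝ) (hQS : QS = GX⁻¹ *ᵥ bS)
    (hLden : Lden = ES2 + 2 * ∑ j, (-QS) j * bS j
        + ∑ j, ∑ k, (-QS) j * ((-QS) k * GX j k))
    (hLden0 : Lden ≠ 0)
    (Zn : (n : ℕ) → Matrix (Fin n) (Fin (p + 1)) ℝ)
    (hZn : ∀ n, Zn n = Matrix.of fun i j => z i.1 j)
    (θh : (n : ℕ) → Fin (p + 1) → ℝ)
    (hθh : ∀ n, θh n = ((Zn n)ᵀ * Zn n)⁻¹ *ᵥ ((Zn n)ᵀ *ᵥ fun i : Fin n => m i.1))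
    (εh : (n : ℕ) → Fin n → ℝ)
    (hεh : ∀ n (i : Fin n), εh n i = m i.1 - (Zn n *ᵥ θh n) i)
    (Qh : ℕ → Fin p → ℝ)
    (hQh : ∀ n, Qh n = ((n : ℝ)⁻¹ • (Matrix.of fun j k =>
        ∑ i ∈ Finset.range n, x i j * x i k : Matrix (Fin p) (Fin p) ℝ))⁻¹
        *ᵥ fun j => (n : ℝ)⁻¹ * ∑ i ∈ Finset.range n, s i * x i j)
    (Sh : (n : ℕ) → Fin n → ℝ)
    (hSh : ∀ n (i : Fin n), Sh n i = s i.1 - x i.1 ⬝ᵥ Qh n) :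
    Tendsto (fun n => (∑ i : Fin n, (εh n i) ^ 2) / (∑ i : Fin n, (Sh n i) ^ 2)) atTop
      (𝓝 (Ee2 / Lden)) := by
  classical
  -- the vector of true coefficients
  set θv : Fin (p + 1) → ℝ := fun j => Fin.cases α (fun k => a k) j with hθv
  have hmz : ∀ i, m i = z i ⬝ᵥ θv + ε i := by
    intro i
    rw [hm, hz]
    show α * s i + x i ⬝ᵥ a + ε i
      = (∑ j, (fun j => Fin.cases (s i) (fun k => x i k) j : Fin (p+1) → ℝ) j * θv j) + ε i
    congr 1
    rw [Fin.sum_univ_succ]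
    simp only [hθv, Fin.cases_zero, Fin.cases_succ]
    show α * s i + (∑ j, x i j * a j) = s i * α + ∑ j, x i j * a j
    ring
  -- abbreviations
  set G : ℕ → Matrix (Fin (p + 1)) (Fin (p + 1)) ℝ := fun n => Matrix.of fun j k =>
    (∑ i ∈ Finset.range n, z i j * z i k) / n with hGdef
  have hG' : Tendsto G atTop (𝓝 GZ) := hG
  set A : ℕ → Matrix (Fin p) (Fin p) ℝ := fun n => (n : ℝ)⁻¹ • Matrix.of fun j k =>
    ∑ i ∈ Finset.range n, x i j * x i k with hAdef
  have hA' : Tendsto A atTop (𝓝 GX) := hA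
  set c : ℕ → Fin (p + 1) → ℝ := fun n j => (∑ i ∈ Finset.range n, z i j * ε i) / n with hcdef
  have hc' : Tendsto c atTop (𝓝 0) := hc
  set v : ℕ → Fin (p + 1) → ℝ := fun n j => (∑ i ∈ Finset.range n, z i j * m i) / n with hvdef
  -- eventual invertibility of the sample Gram matrices
  have hGdetEv : ∀ᶠ n in atTop, IsUnit (G n).det := by
    have hd : Tendsto (fun n => (G n).det) atTop (𝓝 GZ.det) :=
      ((continuous_id.matrix_det).tendsto GZ).comp hG'
    filter_upwards [hd.eventually_ne hGZinv.ne_zero] with n hn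
    exact isUnit_iff_ne_zero.2 hn
  -- convergence of v
  have hveq : ∀ n, v n = fun j => (∑ k, G n j k * θv k) + c n j := by
    intro n; funext j
    show (∑ i ∈ Finset.range n, z i j * m i) / (n : ℝ) = _
    have h1 : (∑ i ∈ Finset.range n, z i j * m i)
        = (∑ k, (∑ i ∈ Finset.range n, z i j * z i k) * θv k)
          + ∑ i ∈ Finset.range n, z i j * ε i := by
      calc (∑ i ∈ Finset.range n, z i j * m i)
          = ∑ i ∈ Finset.range n, ((∑ k, z i j * (z i k * θv k)) + z i j * ε i) := by
            refine Finset.sum_congr rfl fun i _ => ?_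
            rw [hmz i, mul_add]
            congr 1
            show z i j * (∑ k, z i k * θv k) = _
            rw [Finset.mul_sum]
        _ = (∑ i ∈ Finset.range n, ∑ k, z i j * (z i k * θv k))
              + ∑ i ∈ Finset.range n, z i j * ε i := Finset.sum_add_distrib
        _ = (∑ k, ∑ i ∈ Finset.range n, z i j * (z i k * θv k))
              + ∑ i ∈ Finset.range n, z i j * ε i := by rw [Finset.sum_comm]
        _ = _ := by
            congr 1
            refine Finset.sum_congr rfl fun k _ => ?_
            rw [Finset.sum_mul]
            exact Finset.sum_congr rfl fun i _ => by ring
    rw [h1, add_div, Finset.sum_div]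
    congr 1
    exact Finset.sum_congr rfl fun k _ => by rw [mul_div_right_comm]; rfl
  have hv : Tendsto v atTop (𝓝 (GZ *ᵥ θv)) := by
    have : ∀ n, v n = fun j => (∑ k, G n j k * θv k) + c n j := hveq
    rw [funext this]
    refine tendsto_pi_nhds.2 fun j => ?_
    have hsum : Tendsto (fun n => ∑ k, G n j k * θv k) atTop (𝓝 (∑ k, GZ j k * θv k)) :=
      tendsto_finset_sum _ fun k _ => (olsAux_tendsto_entry hG' j k).mul tendsto_const_nhds
    have hz0 : Tendsto (fun n => c n j) atTop (𝓝 0) := by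
      simpa using tendsto_pi_nhds.1 hc' j
    have := hsum.add hz0
    rw [add_zero] at this
    exact this
  -- convergence of the OLS coefficients
  have hθ : Tendsto θh atTop (𝓝 θv) := by
    have hkey : ∀ᶠ n in atTop, (G n)⁻¹ *ᵥ v n = θh n := by
      filter_upwards [hGdetEv, eventually_ge_atTop 1] with n hdet hn1
      have hn0 : (n : ℝ) ≠ 0 := by
        have : (0 : ℝ) < n := by exact_mod_cast hn1
        exact this.ne'
      rw [hθh n]
      have h1 : (Zn n)ᵀ * Zn n = (n : ℝ) • G n := by
        ext j k
        show ∑ i : Fin n, (Zn n)ᵀ j i * Zn n i k = ((n : ℝ) • G n) j k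
        simp only [hZn, Matrix.transpose_apply, Matrix.of_apply, Matrix.smul_apply,
          smul_eq_mul, hGdef]
        rw [Fin.sum_univ_eq_sum_range (fun i => z i j * z i k) n, mul_comm,
          div_mul_cancel₀ _ hn0]
      have h2 : ((Zn n)ᵀ *ᵥ fun i : Fin n => m i.1) = (n : ℝ) • v n := by
        funext j
        show ∑ i : Fin n, (Zn n)ᵀ j i * m i.1 = ((n : ℝ) • v n) j
        simp only [hZn, Matrix.transpose_apply, Matrix.of_apply, Pi.smul_apply,
          smul_eq_mul, hvdef]
        rw [Fin.sum_univ_eq_sum_range (fun i => z i j * m i) n, mul_comm,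
          div_mul_cancel₀ _ hn0]
      have h3 : ((n : ℝ) • G n)⁻¹ = (n : ℝ)⁻¹ • (G n)⁻¹ := by
        apply Matrix.inv_eq_right_inv
        rw [Matrix.smul_mul, Matrix.mul_smul, Matrix.mul_nonsing_inv _ hdet, smul_smul,
          mul_inv_cancel₀ hn0, one_smul]
      rw [h1, h2, h3, Matrix.smul_mulVec, Matrix.mulVec_smul, smul_smul,
        inv_mul_cancel₀ hn0, one_smul]
    have hlim : Tendsto (fun n => (G n)⁻¹ *ᵥ v n) atTop (𝓝 θv) := by
      have := olsAux_tendsto_mulVec (olsAux_tendsto_inv hGZinv hG') hv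
      rwa [Matrix.mulVec_mulVec, Matrix.nonsing_inv_mul _ hGZinv, Matrix.one_mulVec] at this
    exact hlim.congr' hkey
  have hδ : Tendsto (fun n => θv - θh n) atTop (𝓝 0) := by
    have := tendsto_const_nhds (x := θv) (f := atTop (α := ℕ)) |>.sub hθ
    simpa using this
  -- numerator
  have hNumId : ∀ n, (∑ i : Fin n, (εh n i) ^ 2) / (n : ℝ)
      = (∑ i ∈ Finset.range n, (ε i) ^ 2) / n
        + 2 * ∑ j, (θv - θh n) j * ((∑ i ∈ Finset.range n, z i j * ε i) / n)
        + ∑ j, ∑ k, (θv - θh n) j * ((θv - θh n) k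
            * ((∑ i ∈ Finset.range n, z i j * z i k) / n)) := by
    intro n
    have hε' : ∀ i : Fin n, εh n i = ε i.1 + z i.1 ⬝ᵥ (θv - θh n) := by
      intro i
      rw [hεh n i, hmz i.1]
      have hmv : (Zn n *ᵥ θh n) i = z i.1 ⬝ᵥ θh n := by
        rw [hZn]; rfl
      rw [hmv, dotProduct_sub]
      ring
    have h0 : (∑ i : Fin n, (εh n i) ^ 2)
        = ∑ i ∈ Finset.range n, (ε i + z i ⬝ᵥ (θv - θh n)) ^ 2 := by
      rw [← Fin.sum_univ_eq_sum_range (fun i => (ε i + z i ⬝ᵥ (θv - θh n)) ^ 2) n]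
      exact Finset.sum_congr rfl fun i _ => by rw [hε' i]
    rw [h0, olsAux_sum_sq_expand n ε z (θv - θh n)]
  have hNum : Tendsto (fun n => (∑ i : Fin n, (εh n i) ^ 2) / (n : ℝ)) atTop (𝓝 Ee2) := by
    have hmid : Tendsto (fun n => ∑ j, (θv - θh n) j
        * ((∑ i ∈ Finset.range n, z i j * ε i) / (n : ℝ))) atTop (𝓝 0) := by
      have := tendsto_finset_sum (Finset.univ : Finset (Fin (p+1))) fun j _ =>
        (tendsto_pi_nhds.1 hδ j).mul (tendsto_pi_nhds.1 hc' j)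
      simpa using this
    have hquad : Tendsto (fun n => ∑ j, ∑ k, (θv - θh n) j * ((θv - θh n) k
        * ((∑ i ∈ Finset.range n, z i j * z i k) / (n : ℝ)))) atTop (𝓝 0) := by
      have := tendsto_finset_sum (Finset.univ : Finset (Fin (p+1))) fun j _ =>
        tendsto_finset_sum (Finset.univ : Finset (Fin (p+1))) fun k _ =>
          (tendsto_pi_nhds.1 hδ j).mul
            ((tendsto_pi_nhds.1 hδ k).mul (olsAux_tendsto_entry hG' j k))
      simp only [Pi.zero_apply, zero_mul, Finset.sum_const_zero] at this
      exact this
    have := (he2.add ((tendsto_const_nhds (x := (2:ℝ))).mul hmid)).add hquad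
    simp only [mul_zero, add_zero] at this
    exact this.congr fun n => (hNumId n).symm
  -- convergence of Qh
  have hQ : Tendsto Qh atTop (𝓝 QS) := by
    rw [hQS]
    exact (olsAux_tendsto_mulVec (olsAux_tendsto_inv hGXinv hA') hb).congr
      fun n => (hQh n).symm
  have hQneg : Tendsto (fun n => -(Qh n)) atTop (𝓝 (-QS)) := hQ.neg
  -- denominator
  have hxb : ∀ n (j : Fin p), (∑ i ∈ Finset.range n, x i j * s i) / (n : ℝ)
      = (n : ℝ)⁻¹ * ∑ i ∈ Finset.range n, s i * x i j := by
    intro n j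
    rw [div_eq_inv_mul]
    congr 1
    exact Finset.sum_congr rfl fun i _ => mul_comm _ _
  have hDenId : ∀ n, (∑ i : Fin n, (Sh n i) ^ 2) / (n : ℝ)
      = (∑ i ∈ Finset.range n, (s i) ^ 2) / n
        + 2 * ∑ j, (-(Qh n)) j * ((∑ i ∈ Finset.range n, x i j * s i) / n)
        + ∑ j, ∑ k, (-(Qh n)) j * ((-(Qh n)) k
            * ((∑ i ∈ Finset.range n, x i j * x i k) / n)) := by
    intro n
    have h0 : (∑ i : Fin n, (Sh n i) ^ 2)
        = ∑ i ∈ Finset.range n, (s i + x i ⬝ᵥ (-(Qh n))) ^ 2 := by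
      rw [← Fin.sum_univ_eq_sum_range (fun i => (s i + x i ⬝ᵥ (-(Qh n))) ^ 2) n]
      refine Finset.sum_congr rfl fun i _ => ?_
      rw [hSh n i, dotProduct_neg]
      ring
    rw [h0, olsAux_sum_sq_expand n s x (-(Qh n))]
  have hDen : Tendsto (fun n => (∑ i : Fin n, (Sh n i) ^ 2) / (n : ℝ)) atTop (𝓝 Lden) := by
    have hxx : ∀ (j k : Fin p), Tendsto (fun n =>
        (∑ i ∈ Finset.range n, x i j * x i k) / (n : ℝ)) atTop (𝓝 (GX j k)) := by
      intro j k
      have := olsAux_tendsto_entry hA' j k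
      simp only [hAdef, Matrix.smul_apply, Matrix.of_apply, smul_eq_mul] at this
      simpa [div_eq_inv_mul] using this
    have hxs : ∀ j : Fin p, Tendsto (fun n =>
        (∑ i ∈ Finset.range n, x i j * s i) / (n : ℝ)) atTop (𝓝 (bS j)) := by
      intro j
      have := tendsto_pi_nhds.1 hb j
      exact this.congr fun n => (hxb n j).symm
    have hmid : Tendsto (fun n => ∑ j, (-(Qh n)) j
        * ((∑ i ∈ Finset.range n, x i j * s i) / (n : ℝ))) atTop
        (𝓝 (∑ j, (-QS) j * bS j)) :=
      tendsto_finset_sum _ fun j _ => (tendsto_pi_nhds.1 hQneg j).mul (hxs j)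
    have hquad : Tendsto (fun n => ∑ j, ∑ k, (-(Qh n)) j * ((-(Qh n)) k
        * ((∑ i ∈ Finset.range n, x i j * x i k) / (n : ℝ)))) atTop
        (𝓝 (∑ j, ∑ k, (-QS) j * ((-QS) k * GX j k))) :=
      tendsto_finset_sum _ fun j _ => tendsto_finset_sum _ fun k _ =>
        (tendsto_pi_nhds.1 hQneg j).mul ((tendsto_pi_nhds.1 hQneg k).mul (hxx j k))
    have := (hs2.add ((tendsto_const_nhds (x := (2:ℝ))).mul hmid)).add hquad
    rw [hLden]
    exact this.congr fun n => (hDenId n).symm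
  -- conclusion
  have hfin : ∀ᶠ n in atTop,
      ((∑ i : Fin n, (εh n i) ^ 2) / (n : ℝ)) / ((∑ i : Fin n, (Sh n i) ^ 2) / (n : ℝ))
        = (∑ i : Fin n, (εh n i) ^ 2) / (∑ i : Fin n, (Sh n i) ^ 2) := by
    filter_upwards [eventually_ge_atTop 1] with n hn
    have : (0 : ℝ) < n := by exact_mod_cast hn
    exact olsAux_ratio _ _ _ this.ne'
  exact (hNum.div hDen hLden0).congr' hfin

/-- Almost-sure consistency of the OLS error-variance ratio (Lemma S.3, first part):
`σ̂²ₙ = (Σᵢ ε̂²_{n,i}) / (Σᵢ Ŝ²_{⊥,n,i}) → E[e²]/E[S_⊥²]` almost surely. -/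
theorem ols_error_variance_ratio_consistency
    (p : ℕ) {Ω : Type*} [MeasurableSpace Ω] (P : Measure Ω) [IsProbabilityMeasure P]
    (X : ℕ → Ω → Fin p → ℝ) (S e : ℕ → Ω → ℝ)
    (hmeas : ∀ i, Measurable fun ω => (X i ω, S i ω, e i ω))
    (hindep : iIndepFun (fun i ω => (X i ω, S i ω, e i ω)) P)
    (hident : ∀ i, IdentDistrib (fun ω => (X i ω, S i ω, e i ω))
      (fun ω => (X 0 ω, S 0 ω, e 0 ω)) P P)
    (α : ℝ) (a : Fin p → ℝ)
    (M : ℕ → Ω → ℝ) (hM : ∀ i ω, M i ω = α * S i ω + (X i ω ⬝ᵥ a) + e i ω)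
    (horthX : ∀ j, ∫ ω, X 0 ω j * e 0 ω ∂P = 0)
    (horthS : ∫ ω, S 0 ω * e 0 ω ∂P = 0)
    (hL2e : MemLp (e 0) 2 P) (hL2S : MemLp (S 0) 2 P)
    (hL2X : ∀ j, MemLp (fun ω => X 0 ω j) 2 P)
    (GX : Matrix (Fin p) (Fin p) ℝ)
    (hGX : GX = Matrix.of fun j k => ∫ ω, X 0 ω j * X 0 ω k ∂P)
    (hGXinv : IsUnit GX.det)
    -- the Gram matrix of Z̃ = (S, Xᵀ)ᵀ is invertible
    (Zt : Ω → Fin (p + 1) → ℝ)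
    (hZt : ∀ ω, Zt ω = fun j => Fin.cases (S 0 ω) (fun k => X 0 ω k) j)
    (GZ : Matrix (Fin (p + 1)) (Fin (p + 1)) ℝ)
    (hGZ : GZ = Matrix.of fun j k => ∫ ω, Zt ω j * Zt ω k ∂P)
    (hGZinv : IsUnit GZ.det)
    (QS : Fin p → ℝ) (hQS : QS = GX⁻¹ *ᵥ fun j => ∫ ω, X 0 ω j * S 0 ω ∂P)
    (Sperp : Ω → ℝ) (hSperp : ∀ ω, Sperp ω = S 0 ω - X 0 ω ⬝ᵥ QS)
    -- the OLS design matrices, coefficients and residuals from the first n observations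
    (Zn : (n : ℕ) → Ω → Matrix (Fin n) (Fin (p + 1)) ℝ)
    (hZn : ∀ n ω, Zn n ω = Matrix.of fun i j => Fin.cases (S i.1 ω) (fun k => X i.1 ω k) j)
    (θhat : (n : ℕ) → Ω → Fin (p + 1) → ℝ)
    (hθhat : ∀ n ω, θhat n ω =
      ((Zn n ω)ᵀ * Zn n ω)⁻¹ *ᵥ ((Zn n ω)ᵀ *ᵥ fun i : Fin n => M i.1 ω))
    (εhat : (n : ℕ) → Fin n → Ω → ℝ)
    (hεhat : ∀ n (i : Fin n) ω, εhat n i ω = M i.1 ω - (Zn n ω *ᵥ θhat n ω) i)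
    -- the sample-residualized exposure
    (Qhat : ℕ → Ω → Fin p → ℝ)
    (hQhat : ∀ n ω, Qhat n ω =
      ((n : ℝ)⁻¹ • (Matrix.of fun j k => ∑ i ∈ Finset.range n, X i ω j * X i ω k :
          Matrix (Fin p) (Fin p) ℝ))⁻¹
        *ᵥ fun j => (n : ℝ)⁻¹ * ∑ i ∈ Finset.range n, S i ω * X i ω j)
    (Shat : (n : ℕ) → Fin n → Ω → ℝ)
    (hShat : ∀ n (i : Fin n) ω, Shat n i ω = S i.1 ω - X i.1 ω ⬝ᵥ Qhat n ω)
    (σhat2 : ℕ → Ω → ℝ)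
    (hσhat2 : ∀ n ω, σhat2 n ω =
      (∑ i : Fin n, (εhat n i ω) ^ 2) / (∑ i : Fin n, (Shat n i ω) ^ 2)) :
    0 < (∫ ω, (Sperp ω) ^ 2 ∂P) ∧
      ∀ᵐ ω ∂P, Tendsto (fun n => σhat2 n ω) atTop
        (𝓝 ((∫ ω, (e 0 ω) ^ 2 ∂P) / ∫ ω, (Sperp ω) ^ 2 ∂P)) := by
  classical
  have hφmeas := olsPhi_meas p
  have hφL2 : ∀ j, MemLp (fun ω => olsPhi p j (X 0 ω, S 0 ω, e 0 ω)) 2 P := by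
    rintro (b | k)
    · cases b
      · exact hL2e
      · exact hL2S
    · exact hL2X k
  have hInt : ∀ j k, Integrable (fun ω =>
      olsPhi p j (X 0 ω, S 0 ω, e 0 ω) * olsPhi p k (X 0 ω, S 0 ω, e 0 ω)) P :=
    fun j k => olsAux_integrable_mul (hφL2 j) (hφL2 k)
  -- strong law of large numbers for all pair products
  have slln : ∀ᵐ ω ∂P, ∀ j k : Bool ⊕ Fin p,
      Tendsto (fun n : ℕ => (∑ i ∈ Finset.range n,
          olsPhi p j (X i ω, S i ω, e i ω) * olsPhi p k (X i ω, S i ω, e i ω)) / (n : ℝ))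
        atTop (𝓝 (∫ ω', olsPhi p j (X 0 ω', S 0 ω', e 0 ω')
          * olsPhi p k (X 0 ω', S 0 ω', e 0 ω') ∂P)) := by
    rw [ae_all_iff]; intro j
    rw [ae_all_iff]; intro k
    have hmjk : Measurable (fun v => olsPhi p j v * olsPhi p k v) :=
      (hφmeas j).mul (hφmeas k)
    have hpair : Pairwise (Function.onFun (IndepFun · · P) (fun i ω =>
        olsPhi p j (X i ω, S i ω, e i ω) * olsPhi p k (X i ω, S i ω, e i ω))) :=
      fun i i' hii' => (hindep.indepFun hii').comp hmjk hmjk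
    have hid : ∀ i, IdentDistrib (fun ω =>
        olsPhi p j (X i ω, S i ω, e i ω) * olsPhi p k (X i ω, S i ω, e i ω))
        (fun ω => olsPhi p j (X 0 ω, S 0 ω, e 0 ω) * olsPhi p k (X 0 ω, S 0 ω, e 0 ω)) P P :=
      fun i => (hident i).comp hmjk
    exact strong_law_ae_real _ (hInt j k) hpair hid
  -- identification of the entries of GZ
  have hZtφ : ∀ ω (j : Fin (p + 1)), Zt ω j = olsPhi p (olsPsi p j) (X 0 ω, S 0 ω, e 0 ω) := by
    intro ω j
    rw [hZt]
    induction j using Fin.cases with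
    | zero => simp
    | succ k => simp
  have hIntZt : ∀ j k, Integrable (fun ω => Zt ω j * Zt ω k) P := by
    intro j k
    refine (hInt (olsPsi p j) (olsPsi p k)).congr
      (Filter.Eventually.of_forall fun ω => ?_)
    simp only [hZtφ]
  have hGZ' : ∀ j k, GZ j k = ∫ ω, olsPhi p (olsPsi p j) (X 0 ω, S 0 ω, e 0 ω)
      * olsPhi p (olsPsi p k) (X 0 ω, S 0 ω, e 0 ω) ∂P := by
    intro j k
    rw [hGZ]
    show (∫ ω, Zt ω j * Zt ω k ∂P) = _
    congr 1
    funext ω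
    rw [hZtφ ω j, hZtφ ω k]
  have hGX' : ∀ j k, GX j k = ∫ ω, X 0 ω j * X 0 ω k ∂P := by
    intro j k; rw [hGX]; rfl
  have hQS' : QS = GX⁻¹ *ᵥ fun j => ∫ ω, S 0 ω * X 0 ω j ∂P := by
    have hbswap : (fun j : Fin p => ∫ ω, X 0 ω j * S 0 ω ∂P)
        = fun j => ∫ ω, S 0 ω * X 0 ω j ∂P := by
      funext j
      exact integral_congr_ae (Filter.Eventually.of_forall fun ω => mul_comm _ _)
    rw [hQS, hbswap]
  -- integrability of products
  have hIntS2 : Integrable (fun ω => S 0 ω ^ 2) P := hL2S.integrable_sq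
  have hIntSX : ∀ j, Integrable (fun ω => S 0 ω * X 0 ω j) P :=
    fun j => olsAux_integrable_mul hL2S (hL2X j)
  have hIntXX : ∀ j k, Integrable (fun ω => X 0 ω j * X 0 ω k) P :=
    fun j k => olsAux_integrable_mul (hL2X j) (hL2X k)
  -- Sperp is square integrable
  have hSperpL2 : MemLp Sperp 2 P := by
    have h1 : (fun ω => X 0 ω ⬝ᵥ QS) = fun ω => ∑ j, QS j * X 0 ω j := by
      funext ω
      exact Finset.sum_congr rfl fun j _ => mul_comm _ _
    have h2 : MemLp (fun ω => X 0 ω ⬝ᵥ QS) 2 P := by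
      rw [h1]
      exact memLp_finset_sum _ fun j _ => (hL2X j).const_mul (QS j)
    have h3 : Sperp = fun ω => S 0 ω - X 0 ω ⬝ᵥ QS := funext hSperp
    rw [h3]
    exact hL2S.sub h2
  have hIntSperp2 : Integrable (fun ω => Sperp ω ^ 2) P := hSperpL2.integrable_sq
  -- positivity of the limiting denominator
  have pos : 0 < ∫ ω, Sperp ω ^ 2 ∂P := by
    rcases (integral_nonneg (f := fun ω => Sperp ω ^ 2) fun ω => sq_nonneg (Sperp ω)).lt_or_eq with h | h
    · exact h
    · exfalso
      have h0 : (fun ω => Sperp ω ^ 2) =ᵐ[P] 0 :=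
        (integral_eq_zero_iff_of_nonneg (fun ω => sq_nonneg (Sperp ω)) hIntSperp2).1 h.symm
      have hS0 : ∀ᵐ ω ∂P, Sperp ω = 0 := by
        filter_upwards [h0] with ω hω
        exact (pow_eq_zero_iff (two_ne_zero)).1 hω
      set u : Fin (p + 1) → ℝ := fun j => Fin.cases 1 (fun k => -QS k) j with hu
      have hGZu : GZ *ᵥ u = 0 := by
        funext j
        show (∑ k, GZ j k * u k) = 0
        have h1 : ∀ k, GZ j k * u k = ∫ ω, Zt ω j * Zt ω k * u k ∂P := by
          intro k
          have hjk : GZ j k = ∫ ω, Zt ω j * Zt ω k ∂P := by rw [hGZ]; rfl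
          rw [hjk]
          exact (integral_mul_const _ _).symm
        
        rw [Finset.sum_congr rfl fun k _ => h1 k,
          ← integral_finset_sum _ (fun k _ => (hIntZt j k).mul_const (u k))]
        apply integral_eq_zero_of_ae
        filter_upwards [hS0] with ω hω
        have h2 : (∑ k, Zt ω j * Zt ω k * u k) = Zt ω j * ∑ k, Zt ω k * u k := by
          rw [Finset.mul_sum]
          exact Finset.sum_congr rfl fun k _ => mul_assoc _ _ _
        have h3 : (∑ k, Zt ω k * u k) = Sperp ω := by
          rw [Fin.sum_univ_succ, hSperp ω, hZt ω]
          show (Fin.cases (S 0 ω) (fun k => X 0 ω k) 0 : ℝ) * u 0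
              + (∑ k : Fin p, Fin.cases (S 0 ω) (fun k' => X 0 ω k') k.succ * u k.succ)
              = S 0 ω - X 0 ω ⬝ᵥ QS
          simp only [Fin.cases_zero, Fin.cases_succ, hu]
          show S 0 ω * 1 + (∑ k : Fin p, X 0 ω k * -QS k) = S 0 ω - ∑ k, X 0 ω k * QS k
          rw [mul_one]
          rw [show (∑ k : Fin p, X 0 ω k * -QS k) = -∑ k, X 0 ω k * QS k by
            rw [← Finset.sum_neg_distrib]
            exact Finset.sum_congr rfl fun k _ => by ring]
          ring
        show (∑ k, Zt ω j * Zt ω k * u k) = 0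
        rw [h2, h3, hω, mul_zero]
      have hu0 : u = 0 := by
        have h4 : GZ⁻¹ *ᵥ (GZ *ᵥ u) = u := by
          rw [Matrix.mulVec_mulVec, Matrix.nonsing_inv_mul _ hGZinv, Matrix.one_mulVec]
        rw [hGZu, Matrix.mulVec_zero] at h4
        exact h4.symm
      have : (1 : ℝ) = 0 := by
        have h5 := congrFun hu0 0
        simpa [hu] using h5
      exact one_ne_zero this
  -- expansion of the limiting denominator
  have hLdenEq : (∫ ω, Sperp ω ^ 2 ∂P) = (∫ ω, S 0 ω ^ 2 ∂P)
      + 2 * ∑ j, (-QS) j * (∫ ω, S 0 ω * X 0 ω j ∂P)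
      + ∑ j, ∑ k, (-QS) j * ((-QS) k * GX j k) := by
    have hpt : ∀ ω, Sperp ω ^ 2
        = S 0 ω ^ 2 + (∑ j, (2 * (-QS) j) * (S 0 ω * X 0 ω j))
          + ∑ j, ∑ k, ((-QS) j * (-QS) k) * (X 0 ω j * X 0 ω k) := by
      intro ω
      rw [hSperp ω]
      have h1 : S 0 ω - X 0 ω ⬝ᵥ QS = S 0 ω + ∑ j, X 0 ω j * (-QS) j := by
        show S 0 ω - ∑ j, X 0 ω j * QS j = _
        rw [sub_eq_add_neg, ← Finset.sum_neg_distrib]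
        exact congrArg (S 0 ω + ·) (Finset.sum_congr rfl fun j _ => by
          show -(X 0 ω j * QS j) = X 0 ω j * (-QS) j
          simp)
      rw [h1, add_sq]
      congr 1
      · congr 1
        rw [Finset.mul_sum]
        refine Finset.sum_congr rfl fun j _ => ?_
        show 2 * S 0 ω * (X 0 ω j * (-QS) j) = _
        ring
      · rw [sq, Finset.sum_mul_sum]
        refine Finset.sum_congr rfl fun j _ => Finset.sum_congr rfl fun k _ => ?_
        show (X 0 ω j * (-QS) j) * (X 0 ω k * (-QS) k) = _
        ring
    have hInt2 : Integrable (fun ω => ∑ j, (2 * (-QS) j) * (S 0 ω * X 0 ω j)) P :=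
      integrable_finset_sum _ fun j _ => (hIntSX j).const_mul _
    have hInt3 : Integrable (fun ω =>
        ∑ j, ∑ k, ((-QS) j * (-QS) k) * (X 0 ω j * X 0 ω k)) P :=
      integrable_finset_sum _ fun j _ =>
        integrable_finset_sum _ fun k _ => (hIntXX j k).const_mul _
    calc (∫ ω, Sperp ω ^ 2 ∂P)
        = ∫ ω, (S 0 ω ^ 2 + (∑ j, (2 * (-QS) j) * (S 0 ω * X 0 ω j))
            + ∑ j, ∑ k, ((-QS) j * (-QS) k) * (X 0 ω j * X 0 ω k)) ∂P := by
          simp only [hpt]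
      _ = (∫ ω, S 0 ω ^ 2 ∂P) + (∫ ω, ∑ j, (2 * (-QS) j) * (S 0 ω * X 0 ω j) ∂P)
            + ∫ ω, ∑ j, ∑ k, ((-QS) j * (-QS) k) * (X 0 ω j * X 0 ω k) ∂P := by
          have hInt12 : Integrable (fun ω => S 0 ω ^ 2
              + ∑ j, (2 * (-QS) j) * (S 0 ω * X 0 ω j)) P := hIntS2.add hInt2
          rw [integral_add hInt12 hInt3]
          congr 1
          exact integral_add hIntS2 hInt2
      _ = (∫ ω, S 0 ω ^ 2 ∂P) + (∑ j, (2 * (-QS) j) * ∫ ω, S 0 ω * X 0 ω j ∂P)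
            + ∑ j, ∑ k, ((-QS) j * (-QS) k) * ∫ ω, X 0 ω j * X 0 ω k ∂P := by
          congr 1
          · congr 1
            rw [integral_finset_sum _ fun j _ => (hIntSX j).const_mul _]
            exact Finset.sum_congr rfl fun j _ => integral_const_mul _ _
          · rw [integral_finset_sum _ fun j _ =>
              integrable_finset_sum _ fun k _ => (hIntXX j k).const_mul _]
            refine Finset.sum_congr rfl fun j _ => ?_
            rw [integral_finset_sum _ fun k _ => (hIntXX j k).const_mul _]
            exact Finset.sum_congr rfl fun k _ => integral_const_mul _ _
      _ = _ := by
          congr 1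
          · congr 1
            rw [Finset.mul_sum]
            exact Finset.sum_congr rfl fun j _ => by ring
          · refine Finset.sum_congr rfl fun j _ => Finset.sum_congr rfl fun k _ => ?_
            rw [hGX' j k]
            ring
  refine ⟨pos, ?_⟩
  filter_upwards [slln] with ω hω
  simp only [hσhat2]
  refine olsDet (fun i => X i ω) (fun i => S i ω) (fun i => e i ω) (fun i => M i ω) α a
    (fun i => hM i ω) GX hGXinv GZ hGZinv
    (fun j => ∫ ω', S 0 ω' * X 0 ω' j ∂P) (∫ ω', S 0 ω' ^ 2 ∂P) (∫ ω', e 0 ω' ^ 2 ∂P)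
    (∫ ω', Sperp ω' ^ 2 ∂P)
    (fun i j => Fin.cases (S i ω) (fun k => X i ω k) j) (fun i => rfl)
    ?_ ?_ ?_ ?_ ?_ ?_ QS hQS' hLdenEq pos.ne'
    (fun n => Zn n ω) (fun n => hZn n ω)
    (fun n => θhat n ω) (fun n => hθhat n ω)
    (fun n i => εhat n i ω) (fun n i => hεhat n i ω)
    (fun n => Qhat n ω) (fun n => hQhat n ω)
    (fun n i => Shat n i ω) (fun n i => hShat n i ω)
  · -- hA
    refine tendsto_pi_nhds.2 fun j => tendsto_pi_nhds.2 fun k => ?_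
    have h := hω (Sum.inr j) (Sum.inr k)
    simp only [olsPhi_inr] at h
    have hval : GX j k = ∫ ω', X 0 ω' j * X 0 ω' k ∂P := hGX' j k
    rw [hval]
    show Tendsto (fun n : ℕ => (n : ℝ)⁻¹ * ∑ i ∈ Finset.range n, X i ω j * X i ω k) atTop _
    simpa [div_eq_inv_mul] using h
  · -- hb
    refine tendsto_pi_nhds.2 fun j => ?_
    have h := hω (Sum.inl true) (Sum.inr j)
    simp only [olsPhi_inl_true, olsPhi_inr] at h
    simpa [div_eq_inv_mul] using h
  · -- hG
    refine tendsto_pi_nhds.2 fun j => tendsto_pi_nhds.2 fun k => ?_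
    rw [show Matrix.of = @Matrix.of (Fin (p+1)) (Fin (p+1)) ℝ from rfl]
    show Tendsto (fun n : ℕ => (∑ i ∈ Finset.range n,
        (Fin.cases (S i ω) (fun k' => X i ω k') j : ℝ)
        * Fin.cases (S i ω) (fun k' => X i ω k') k) / (n : ℝ)) atTop (𝓝 (GZ j k))
    rw [hGZ' j k]
    induction j using Fin.cases with
    | zero =>
      induction k using Fin.cases with
      | zero => simpa using hω (Sum.inl true) (Sum.inl true)
      | succ k' => simpa using hω (Sum.inl true) (Sum.inr k')
    | succ j' =>
      induction k using Fin.cases with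
      | zero => simpa using hω (Sum.inr j') (Sum.inl true)
      | succ k' => simpa using hω (Sum.inr j') (Sum.inr k')
  · -- hc
    refine tendsto_pi_nhds.2 fun j => ?_
    show Tendsto (fun n : ℕ => (∑ i ∈ Finset.range n,
        (Fin.cases (S i ω) (fun k' => X i ω k') j : ℝ) * e i ω) / (n : ℝ)) atTop
        (𝓝 ((0 : Fin (p + 1) → ℝ) j))
    induction j using Fin.cases with
    | zero => simpa [horthS] using hω (Sum.inl true) (Sum.inl false)
    | succ k' => simpa [horthX k'] using hω (Sum.inr k') (Sum.inl false)
  · -- he2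
    have h := hω (Sum.inl false) (Sum.inl false)
    simpa [pow_two] using h
  · -- hs2
    have h := hω (Sum.inl true) (Sum.inl true)
    simpa [pow_two] using h
end
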